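/- Every Lie algebra automorphism Ψ of the complex Lie algebra r₂ ⊕ ℂ (single nonzero bracket [e₁,e₂]=e₂) has the form Ψ(e₁) = e₁ + α₁e₂ + α₂e₃, Ψ(e₂) = α₃e₂, Ψ(e₃) = α₄e₃ for some α₁,α₂ ∈ ℂ and α₃,α₄ ∈ ℂ*. -/

import Mathlib

/-- Every Lie algebra automorphism of `r₂ ⊕ ℂ` (single nonzero bracket
`[e₁,e₂]=e₂`) has the form `Ψ(e₁)=e₁+α₁e₂+α₂e₃`, `Ψ(e₂)=α₃e₂`,
`Ψ(e₃)=α₄e₃` with `α₃, α₄ ≠ 0`. -/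
theorem stmt14 {L : Type*} [LieRing L] [LieAlgebra ℂ L]
    (b : Module.Basis (Fin 3) ℂ L)
    (h12 : ⁅b 0, b 1⁆ = b 1) (h13 : ⁅b 0, b 2⁆ = 0)
    (h23 : ⁅b 1, b 2⁆ = 0)
    (Ψ : L ≃ₗ[ℂ] L) (hΨ : ∀ x y : L, Ψ ⁅x, y⁆ = ⁅Ψ x, Ψ y⁆) :
    ∃ α₁ α₂ α₃ α₄ : ℂ, α₃ ≠ 0 ∧ α₄ ≠ 0 ∧
      Ψ (b 0) = b 0 + α₁ • b 1 + α₂ • b 2 ∧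
      Ψ (b 1) = α₃ • b 1 ∧
      Ψ (b 2) = α₄ • b 2 := by
  have h21 : ⁅b 1, b 0⁆ = -b 1 := by rw [← lie_skew, h12]
  have h31 : ⁅b 2, b 0⁆ = 0 := by rw [← lie_skew, h13, neg_zero]
  have h32 : ⁅b 2, b 1⁆ = 0 := by rw [← lie_skew, h23, neg_zero]
  have hx : ∀ x : L, x = b.repr x 0 • b 0 + b.repr x 1 • b 1 + b.repr x 2 • b 2 := by
    intro x
    have := b.sum_repr x
    rw [Fin.sum_univ_three] at this
    exact this.symm
  have key : ∀ x0 x1 x2 y0 y1 y2 : ℂ,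
      ⁅x0 • b 0 + x1 • b 1 + x2 • b 2, y0 • b 0 + y1 • b 1 + y2 • b 2⁆
        = (x0 * y1 - x1 * y0) • b 1 := by
    intro x0 x1 x2 y0 y1 y2
    simp only [add_lie, lie_add, smul_lie, lie_smul, h12, h13, h23, h21, h31, h32,
      lie_self, smul_zero, smul_neg, add_zero, zero_add]
    module
  set a00 := b.repr (Ψ (b 0)) 0 with ha00
  set a10 := b.repr (Ψ (b 0)) 1 with ha10
  set a20 := b.repr (Ψ (b 0)) 2 with ha20
  set a01 := b.repr (Ψ (b 1)) 0 with ha01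
  set a11 := b.repr (Ψ (b 1)) 1 with ha11
  set a21 := b.repr (Ψ (b 1)) 2 with ha21
  set a02 := b.repr (Ψ (b 2)) 0 with ha02
  set a12 := b.repr (Ψ (b 2)) 1 with ha12
  set a22 := b.repr (Ψ (b 2)) 2 with ha22
  have e1 : Ψ (b 1) = (a00 * a11 - a10 * a01) • b 1 := by
    conv_lhs => rw [← h12, hΨ, hx (Ψ (b 0)), hx (Ψ (b 1))]
    rw [key]
  have e2 : (0 : L) = (a00 * a12 - a10 * a02) • b 1 := by
    have : Ψ ⁅b 0, b 2⁆ = (a00 * a12 - a10 * a02) • b 1 := by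
      rw [hΨ, hx (Ψ (b 0)), hx (Ψ (b 2)), key]
    rw [h13, map_zero] at this
    exact this
  have e3 : (0 : L) = (a01 * a12 - a11 * a02) • b 1 := by
    have : Ψ ⁅b 1, b 2⁆ = (a01 * a12 - a11 * a02) • b 1 := by
      rw [hΨ, hx (Ψ (b 1)), hx (Ψ (b 2)), key]
    rw [h23, map_zero] at this
    exact this
  -- extract coordinates
  have c10 : a01 = 0 := by
    have := congrArg (fun v => b.repr v 0) e1
    simpa [ha01] using this
  have c11 : a11 = a00 * a11 - a10 * a01 := by
    have := congrArg (fun v => b.repr v 1) e1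
    simpa [ha11] using this
  have c12 : a21 = 0 := by
    have := congrArg (fun v => b.repr v 2) e1
    simpa [ha21] using this
  have c2 : a00 * a12 - a10 * a02 = 0 := by
    have := congrArg (fun v => b.repr v 1) e2
    simpa using this.symm
  have c3 : a01 * a12 - a11 * a02 = 0 := by
    have := congrArg (fun v => b.repr v 1) e3
    simpa using this.symm
  have hΨ1 : Ψ (b 1) = a11 • b 1 := by
    conv_lhs => rw [hx (Ψ (b 1))]
    rw [← ha01, ← ha11, ← ha21, c10, c12]
    simp
  have hb1 : b 1 ≠ 0 := b.ne_zero 1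
  have ha11ne : a11 ≠ 0 := by
    intro h
    apply hb1
    have : Ψ (b 1) = 0 := by rw [hΨ1, h, zero_smul]
    simpa using Ψ.injective (by simpa using this)
  have ha001 : a00 = 1 := by
    have h : (a00 - 1) * a11 = 0 := by linear_combination -c11 + a10 * c10
    rcases mul_eq_zero.mp h with h | h
    · exact sub_eq_zero.mp h
    · exact absurd h ha11ne
  have ha02z : a02 = 0 := by
    rw [c10, zero_mul, zero_sub, neg_eq_zero] at c3
    rcases mul_eq_zero.mp c3 with h | h
    · exact absurd h ha11ne
    · exact h
  have ha12z : a12 = 0 := by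
    rw [ha001, one_mul, ha02z, mul_zero, sub_zero] at c2
    exact c2
  have hΨ2 : Ψ (b 2) = a22 • b 2 := by
    conv_lhs => rw [hx (Ψ (b 2))]
    rw [← ha02, ← ha12, ← ha22, ha02z, ha12z]
    simp
  have hb2 : b 2 ≠ 0 := b.ne_zero 2
  have ha22ne : a22 ≠ 0 := by
    intro h
    apply hb2
    have : Ψ (b 2) = 0 := by rw [hΨ2, h, zero_smul]
    simpa using Ψ.injective (by simpa using this)
  refine ⟨a10, a20, a11, a22, ha11ne, ha22ne, ?_, hΨ1, hΨ2⟩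
  conv_lhs => rw [hx (Ψ (b 0))]
  rw [show (b.repr (Ψ (b 0))) 0 = a00 from rfl, ha001]
  simp
  rfl
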